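/- The invertible elements of the monoid DR_𝔣 are exactly the classes of ideals coprime to 𝔣, and the unit group DR_𝔣^× is isomorphic to the strict ray class group of conductor 𝔣. -/

import Mathlib

open scoped nonZeroDivisors

/-- An element of a number field is totally positive if every real embedding sends it
to a positive real. -/
def TotPos {K : Type*} [Field K] (x : K) : Prop := ∀ φ : K →+* ℝ, 0 < φ x

/-- The Deligne–Ribet relation on (nonzero) integral ideals, at conductor `𝔣`:
`𝔞 ∼_𝔣 𝔟` iff there is a totally positive `x ∈ K^×` with `x - 1 ∈ 𝔣𝔟⁻¹` (as
fractional ideals) and `(x) = 𝔞𝔟⁻¹`. -/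
def DRrel {K : Type*} [Field K] [NumberField K] (𝔣 : Ideal (NumberField.RingOfIntegers K))
    (𝔞 𝔟 : Ideal (NumberField.RingOfIntegers K)) : Prop :=
  ∃ x : K, x ≠ 0 ∧ TotPos x ∧
    x - 1 ∈ ((𝔣 : FractionalIdeal (NumberField.RingOfIntegers K)⁰ K) *
      ((𝔟 : FractionalIdeal (NumberField.RingOfIntegers K)⁰ K))⁻¹) ∧
    FractionalIdeal.spanSingleton (NumberField.RingOfIntegers K)⁰ x =
      (𝔞 : FractionalIdeal (NumberField.RingOfIntegers K)⁰ K) *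
        ((𝔟 : FractionalIdeal (NumberField.RingOfIntegers K)⁰ K))⁻¹

/-- The Deligne–Ribet relation as a relation on the type of nonzero ideals. -/
def DRrel' {K : Type*} [Field K] [NumberField K] (𝔣 : Ideal (NumberField.RingOfIntegers K)) :
    {I : Ideal (NumberField.RingOfIntegers K) // I ≠ 0} →
    {I : Ideal (NumberField.RingOfIntegers K) // I ≠ 0} → Prop :=
  fun 𝔞 𝔟 => DRrel 𝔣 𝔞.1 𝔟.1

/-- The strict (narrow) ray class relation of conductor `𝔣` on nonzero ideals coprime
to `𝔣`. -/
def RayRel {K : Type*} [Field K] [NumberField K]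
    (𝔣 : Ideal (NumberField.RingOfIntegers K)) :
    {I : Ideal (NumberField.RingOfIntegers K) // I ≠ 0 ∧ IsCoprime I 𝔣} →
    {I : Ideal (NumberField.RingOfIntegers K) // I ≠ 0 ∧ IsCoprime I 𝔣} → Prop :=
  fun 𝔞 𝔟 => ∃ x : K, x ≠ 0 ∧ TotPos x ∧
    x - 1 ∈ (𝔣 : FractionalIdeal (NumberField.RingOfIntegers K)⁰ K) ∧
    FractionalIdeal.spanSingleton (NumberField.RingOfIntegers K)⁰ x =
      (𝔞.1 : FractionalIdeal (NumberField.RingOfIntegers K)⁰ K) *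
        ((𝔟.1 : FractionalIdeal (NumberField.RingOfIntegers K)⁰ K))⁻¹

/-- A class in `DR_𝔣` is invertible if some (equivalently any) representative admits a
multiplicative inverse modulo `∼_𝔣`. -/
def IsInvClass {K : Type*} [Field K] [NumberField K]
    (𝔣 : Ideal (NumberField.RingOfIntegers K)) (c : Quot (DRrel' (K := K) 𝔣)) : Prop :=
  ∃ 𝔞 𝔟 : {I : Ideal (NumberField.RingOfIntegers K) // I ≠ 0},
    c = Quot.mk (DRrel' 𝔣) 𝔞 ∧ DRrel 𝔣 (𝔞.1 * 𝔟.1) 1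

set_option linter.unusedSectionVars false
open NumberField FractionalIdeal

section Aux
variable {K : Type*} [Field K] [NumberField K]

lemma totPos_one : TotPos (1 : K) := fun φ => by simp

lemma TotPos.mul {x y : K} (hx : TotPos x) (hy : TotPos y) : TotPos (x * y) :=
  fun φ => by simpa using mul_pos (hx φ) (hy φ)

lemma TotPos.inv {x : K} (hx : TotPos x) : TotPos x⁻¹ :=
  fun φ => by rw [map_inv₀]; exact inv_pos.mpr (hx φ)

lemma exists_totPos_approx (𝔪 : Ideal (𝓞 K)) (h : 𝔪 ≠ 0) (c : 𝓞 K) :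
    ∃ z : 𝓞 K, z - c ∈ 𝔪 ∧ TotPos (z : K) ∧ z ≠ 0 := by
  set N := Ideal.absNorm 𝔪 with hNdef
  have hN0 : N ≠ 0 := by
    rw [ne_eq, Ideal.absNorm_eq_zero_iff]; exact h
  have hNmem : (N : 𝓞 K) ∈ 𝔪 := Ideal.absNorm_mem 𝔪
  have hN1 : (1 : ℝ) ≤ (N : ℝ) := by exact_mod_cast Nat.one_le_iff_ne_zero.mpr hN0
  obtain ⟨B, hB⟩ := Finite.exists_le (fun φ : K →+* ℝ => -φ (c : K))
  obtain ⟨n, hn⟩ := exists_nat_gt B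
  have key : ∀ m : ℕ, (n : ℝ) ≤ m → TotPos ((c + (m : 𝓞 K) * N : 𝓞 K) : K) := by
    intro m hm φ
    have h1 : ((c + (m : 𝓞 K) * N : 𝓞 K) : K) = (c : K) + (m : K) * (N : K) := by
      push_cast; ring
    rw [h1, _root_.map_add, _root_.map_mul, map_natCast, map_natCast]
    have h2 : -φ (c : K) ≤ B := hB φ
    have h3 : (m : ℝ) * N ≥ (m : ℝ) := le_mul_of_one_le_right (by positivity) hN1
    nlinarith [hn]
  have hmem : ∀ m : ℕ, (c + (m : 𝓞 K) * N) - c ∈ 𝔪 := by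
    intro m; simpa using Ideal.mul_mem_left _ _ hNmem
  by_cases hz : c + ((n+1 : ℕ) : 𝓞 K) * N = 0
  · refine ⟨c + ((n+2 : ℕ) : 𝓞 K) * N, hmem _, key _ (by push_cast; linarith), ?_⟩
    have h4 : c + ((n+2 : ℕ) : 𝓞 K) * N = (c + ((n+1 : ℕ) : 𝓞 K) * N) + N := by push_cast; ring
    rw [h4, hz, zero_add]
    exact_mod_cast Nat.cast_ne_zero.mpr hN0
  · exact ⟨c + ((n+1 : ℕ) : 𝓞 K) * N, hmem _, key _ (by push_cast; linarith), hz⟩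

lemma exists_good (𝔣 𝔟 : Ideal (𝓞 K)) (h𝔣 : 𝔣 ≠ 0) (h𝔟 : 𝔟 ≠ 0) (hco : IsCoprime 𝔟 𝔣) :
    ∃ z : 𝓞 K, z ∈ 𝔟 ∧ z - 1 ∈ 𝔣 ∧ TotPos (z : K) ∧ z ≠ 0 := by
  have hsup : 𝔟 ⊔ 𝔣 = ⊤ := Ideal.isCoprime_iff_sup_eq.mp hco
  have h1 : (1 : 𝓞 K) ∈ 𝔟 ⊔ 𝔣 := hsup ▸ Submodule.mem_top
  obtain ⟨b, hb, f, hf, hbf⟩ := Submodule.mem_sup.mp h1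
  obtain ⟨z, hz1, hz2, hz3⟩ := exists_totPos_approx (𝔟 * 𝔣) (mul_ne_zero h𝔟 h𝔣) b
  refine ⟨z, ?_, ?_, hz2, hz3⟩
  · have h2 : z = (z - b) + b := by ring
    rw [h2]; exact add_mem (Ideal.mul_le_left hz1) hb
  · have h2 : z - 1 = (z - b) + (b - 1) := by ring
    rw [h2]; refine add_mem (Ideal.mul_le_right hz1) ?_
    have h3 : b - 1 = -f := by rw [← hbf]; ring
    rw [h3]; exact neg_mem hf
end Aux
section Aux2
variable {K : Type*} [Field K] [NumberField K]

lemma fmem_neg {I : FractionalIdeal (𝓞 K)⁰ K} {a : K} (ha : a ∈ I) : -a ∈ I := by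
  rw [← FractionalIdeal.mem_coe] at *
  exact neg_mem ha

lemma fmem_add {I : FractionalIdeal (𝓞 K)⁰ K} {a b : K} (ha : a ∈ I) (hb : b ∈ I) :
    a + b ∈ I := by
  rw [← FractionalIdeal.mem_coe] at *
  exact add_mem ha hb

lemma DRrel.refl' (𝔣 : Ideal (𝓞 K)) {𝔞 : Ideal (𝓞 K)} (h𝔞 : 𝔞 ≠ 0) : DRrel 𝔣 𝔞 𝔞 := by
  refine ⟨1, one_ne_zero, totPos_one, ?_, ?_⟩
  · simpa using FractionalIdeal.zero_mem _
  · rw [spanSingleton_one, mul_inv_cancel₀ (coeIdeal_ne_zero.mpr h𝔞)]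

lemma DRrel.symm' (𝔣 : Ideal (𝓞 K)) {𝔞 𝔟 : Ideal (𝓞 K)} (h𝔞 : 𝔞 ≠ 0) (h𝔟 : 𝔟 ≠ 0)
    (h : DRrel 𝔣 𝔞 𝔟) : DRrel 𝔣 𝔟 𝔞 := by
  obtain ⟨x, hx0, hxp, hxm, hxs⟩ := h
  have ha' : (𝔞 : FractionalIdeal (𝓞 K)⁰ K) ≠ 0 := coeIdeal_ne_zero.mpr h𝔞
  have hb' : (𝔟 : FractionalIdeal (𝓞 K)⁰ K) ≠ 0 := coeIdeal_ne_zero.mpr h𝔟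
  refine ⟨x⁻¹, inv_ne_zero hx0, hxp.inv, ?_, ?_⟩
  · have h1 : x⁻¹ * (x - 1) ∈ spanSingleton (𝓞 K)⁰ x⁻¹ *
        ((𝔣 : FractionalIdeal (𝓞 K)⁰ K) * (𝔟 : FractionalIdeal (𝓞 K)⁰ K)⁻¹) :=
      mul_mem_mul (mem_spanSingleton_self _ _) hxm
    have h2 : spanSingleton (𝓞 K)⁰ x⁻¹ *
        ((𝔣 : FractionalIdeal (𝓞 K)⁰ K) * (𝔟 : FractionalIdeal (𝓞 K)⁰ K)⁻¹) =
        (𝔣 : FractionalIdeal (𝓞 K)⁰ K) * (𝔞 : FractionalIdeal (𝓞 K)⁰ K)⁻¹ := by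
      rw [← spanSingleton_inv, hxs, mul_inv, inv_inv]
      field_simp <;> ring
    rw [h2] at h1
    have h3 : x⁻¹ - 1 = -(x⁻¹ * (x - 1)) := by field_simp; ring
    rw [h3]
    exact fmem_neg h1
  · rw [← spanSingleton_inv, hxs, mul_inv, inv_inv, mul_comm]

lemma DRrel.trans' (𝔣 : Ideal (𝓞 K)) {𝔞 𝔟 𝔠 : Ideal (𝓞 K)} (h𝔟 : 𝔟 ≠ 0)
    (h1 : DRrel 𝔣 𝔞 𝔟) (h2 : DRrel 𝔣 𝔟 𝔠) : DRrel 𝔣 𝔞 𝔠 := by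
  obtain ⟨x, hx0, hxp, hxm, hxs⟩ := h1
  obtain ⟨y, hy0, hyp, hym, hys⟩ := h2
  have hb' : (𝔟 : FractionalIdeal (𝓞 K)⁰ K) ≠ 0 := coeIdeal_ne_zero.mpr h𝔟
  refine ⟨x * y, mul_ne_zero hx0 hy0, hxp.mul hyp, ?_, ?_⟩
  · have h1 : (x - 1) * y ∈ ((𝔣 : FractionalIdeal (𝓞 K)⁰ K) *
        (𝔟 : FractionalIdeal (𝓞 K)⁰ K)⁻¹) * spanSingleton (𝓞 K)⁰ y :=
      mul_mem_mul hxm (mem_spanSingleton_self _ _)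
    have h2 : ((𝔣 : FractionalIdeal (𝓞 K)⁰ K) * (𝔟 : FractionalIdeal (𝓞 K)⁰ K)⁻¹) *
        spanSingleton (𝓞 K)⁰ y =
        (𝔣 : FractionalIdeal (𝓞 K)⁰ K) * (𝔠 : FractionalIdeal (𝓞 K)⁰ K)⁻¹ := by
      rw [hys]
      field_simp <;> ring
    rw [h2] at h1
    have h3 : x * y - 1 = (x - 1) * y + (y - 1) := by ring
    rw [h3]
    exact fmem_add h1 hym
  · rw [← spanSingleton_mul_spanSingleton, hxs, hys]
    field_simp <;> ring

end Aux2
section Aux3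
variable {K : Type*} [Field K] [NumberField K]

lemma DRrel.mul_right' (𝔣 : Ideal (𝓞 K)) {𝔞 𝔟 : Ideal (𝓞 K)} (𝔠 : Ideal (𝓞 K))
    (h𝔟 : 𝔟 ≠ 0) (h𝔠 : 𝔠 ≠ 0) (h : DRrel 𝔣 𝔞 𝔟) : DRrel 𝔣 (𝔞 * 𝔠) (𝔟 * 𝔠) := by
  obtain ⟨x, hx0, hxp, hxm, hxs⟩ := h
  have hb' : (𝔟 : FractionalIdeal (𝓞 K)⁰ K) ≠ 0 := coeIdeal_ne_zero.mpr h𝔟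
  have hc' : (𝔠 : FractionalIdeal (𝓞 K)⁰ K) ≠ 0 := coeIdeal_ne_zero.mpr h𝔠
  refine ⟨x, hx0, hxp, ?_, ?_⟩
  · have hone : (1 : K) ∈ (𝔠 : FractionalIdeal (𝓞 K)⁰ K)⁻¹ := by
      rw [mem_inv_iff hc']
      intro y hy
      rw [one_mul]
      exact coeIdeal_le_one hy
    have h1 : (x - 1) * 1 ∈ ((𝔣 : FractionalIdeal (𝓞 K)⁰ K) *
        (𝔟 : FractionalIdeal (𝓞 K)⁰ K)⁻¹) * (𝔠 : FractionalIdeal (𝓞 K)⁰ K)⁻¹ :=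
      mul_mem_mul hxm hone
    have h2 : ((𝔣 : FractionalIdeal (𝓞 K)⁰ K) * (𝔟 : FractionalIdeal (𝓞 K)⁰ K)⁻¹) *
        (𝔠 : FractionalIdeal (𝓞 K)⁰ K)⁻¹ =
        (𝔣 : FractionalIdeal (𝓞 K)⁰ K) * (((𝔟 * 𝔠 : Ideal (𝓞 K)) :
          FractionalIdeal (𝓞 K)⁰ K))⁻¹ := by
      rw [coeIdeal_mul, mul_inv]
      ring
    rwa [h2, mul_one] at h1
  · rw [hxs, coeIdeal_mul, coeIdeal_mul, mul_inv]
    field_simp <;> ring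

lemma coprime_of_DRrel_one (𝔣 𝔞 𝔟 : Ideal (𝓞 K)) (h : DRrel 𝔣 (𝔞 * 𝔟) 1) :
    IsCoprime 𝔞 𝔣 := by
  obtain ⟨x, hx0, hxp, hxm, hxs⟩ := h
  rw [Ideal.one_eq_top, coeIdeal_top, inv_one, mul_one] at hxm hxs
  obtain ⟨f, hf, hfx⟩ := (mem_coeIdeal _).mp hxm
  have hx : x = algebraMap (𝓞 K) K (1 + f) := by
    rw [_root_.map_add, _root_.map_one, hfx]; ring
  have hspan : (Ideal.span {1 + f} : Ideal (𝓞 K)) = 𝔞 * 𝔟 := by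
    apply coeIdeal_injective (K := K)
    show ((Ideal.span {1 + f} : Ideal (𝓞 K)) : FractionalIdeal (𝓞 K)⁰ K) = ((𝔞 * 𝔟 : Ideal (𝓞 K)) : FractionalIdeal (𝓞 K)⁰ K)
    rw [coeIdeal_span_singleton, ← hx, hxs]
  have hcop : IsCoprime (𝔞 * 𝔟) 𝔣 := by
    rw [← hspan]
    rw [Ideal.isCoprime_iff_sup_eq, Ideal.eq_top_iff_one]
    have h2 : ((1 + f) - f : 𝓞 K) ∈ Ideal.span {1 + f} ⊔ 𝔣 :=
      sub_mem (Ideal.mem_sup_left (Ideal.subset_span (Set.mem_singleton _)))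
        (Ideal.mem_sup_right hf)
    simpa using h2
  exact hcop.of_mul_left_left

lemma exists_DRrel_inv (𝔣 𝔞 : Ideal (𝓞 K)) (h𝔣 : 𝔣 ≠ 0) (h𝔞 : 𝔞 ≠ 0)
    (hco : IsCoprime 𝔞 𝔣) : ∃ 𝔟 : Ideal (𝓞 K), 𝔟 ≠ 0 ∧ DRrel 𝔣 (𝔞 * 𝔟) 1 := by
  obtain ⟨z, hz𝔞, hz𝔣, hzp, hz0⟩ := exists_good 𝔣 𝔞 h𝔣 h𝔞 hco
  have hdvd : 𝔞 ∣ Ideal.span {z} := Ideal.dvd_iff_le.mpr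
    ((Ideal.span_singleton_le_iff_mem _).mpr hz𝔞)
  obtain ⟨𝔟, h𝔟⟩ := hdvd
  have h𝔟0 : 𝔟 ≠ 0 := by
    intro h0
    rw [h0, mul_zero] at h𝔟
    exact hz0 (Ideal.span_singleton_eq_bot.mp h𝔟)
  refine ⟨𝔟, h𝔟0, (z : K), RingOfIntegers.coe_ne_zero_iff.mpr hz0, hzp, ?_, ?_⟩
  · rw [Ideal.one_eq_top, coeIdeal_top, inv_one, mul_one]
    refine (mem_coeIdeal _).mpr ⟨z - 1, hz𝔣, ?_⟩
    push_cast; ring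
  · rw [Ideal.one_eq_top, coeIdeal_top, inv_one, mul_one, ← h𝔟,
      ← coeIdeal_span_singleton]
end Aux3
section Aux4
variable {K : Type*} [Field K] [NumberField K]

lemma mem_of_coe_mem {I : Ideal (𝓞 K)} {a : 𝓞 K}
    (h : (a : K) ∈ (I : FractionalIdeal (𝓞 K)⁰ K)) : a ∈ I := by
  obtain ⟨v, hv, hva⟩ := (mem_coeIdeal _).mp h
  rwa [← RingOfIntegers.coe_injective hva]

lemma coe_sub_one_mem {I : Ideal (𝓞 K)} {z : 𝓞 K} (h : z - 1 ∈ I) :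
    (z : K) - 1 ∈ (I : FractionalIdeal (𝓞 K)⁰ K) := by
  have h1 := mem_coeIdeal_of_mem (P := K) (𝓞 K)⁰ h
  rwa [show (algebraMap (𝓞 K) K (z - 1)) = (z : K) - 1 by push_cast; ring] at h1

lemma isCoprime_span_of_sub_one_mem {𝔣 : Ideal (𝓞 K)} {z : 𝓞 K} (h : z - 1 ∈ 𝔣) :
    IsCoprime (Ideal.span {z}) 𝔣 := by
  rw [Ideal.isCoprime_iff_sup_eq, Ideal.eq_top_iff_one]
  have h2 : (z - (z - 1) : 𝓞 K) ∈ Ideal.span {z} ⊔ 𝔣 :=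
    sub_mem (Ideal.mem_sup_left (Ideal.subset_span (Set.mem_singleton _)))
      (Ideal.mem_sup_right h)
  simpa using h2

lemma rayQuot_eq_of_DRrel (𝔣 : Ideal (𝓞 K)) (h𝔣 : 𝔣 ≠ 0)
    (𝔞 𝔟 : {I : Ideal (𝓞 K) // I ≠ 0 ∧ IsCoprime I 𝔣})
    (h : DRrel 𝔣 𝔞.1 𝔟.1) :
    Quot.mk (RayRel 𝔣) 𝔞 = Quot.mk (RayRel 𝔣) 𝔟 := by
  obtain ⟨x, hx0, hxp, hxm, hxs⟩ := h
  have ha' : (𝔞.1 : FractionalIdeal (𝓞 K)⁰ K) ≠ 0 := coeIdeal_ne_zero.mpr 𝔞.2.1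
  have hb' : (𝔟.1 : FractionalIdeal (𝓞 K)⁰ K) ≠ 0 := coeIdeal_ne_zero.mpr 𝔟.2.1
  obtain ⟨z, hz𝔟, hz𝔣, hzp, hz0⟩ := exists_good 𝔣 𝔟.1 h𝔣 𝔟.2.1 𝔟.2.2
  have hzx : (z : K) * x ∈ (𝔞.1 : FractionalIdeal (𝓞 K)⁰ K) := by
    have h1 : (z : K) * x ∈ (𝔟.1 : FractionalIdeal (𝓞 K)⁰ K) * spanSingleton (𝓞 K)⁰ x :=
      mul_mem_mul (mem_coeIdeal_of_mem (P := K) (𝓞 K)⁰ hz𝔟) (mem_spanSingleton_self _ _)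
    rwa [hxs, show ((𝔟.1 : FractionalIdeal (𝓞 K)⁰ K) *
      ((𝔞.1 : FractionalIdeal (𝓞 K)⁰ K) * ((𝔟.1 : FractionalIdeal (𝓞 K)⁰ K))⁻¹)) =
      (𝔞.1 : FractionalIdeal (𝓞 K)⁰ K) by field_simp <;> ring] at h1
  obtain ⟨w, hw𝔞, hw⟩ := (mem_coeIdeal _).mp hzx
  have hwK : (w : K) = (z : K) * x := hw
  have hw0 : w ≠ 0 := by
    intro h0
    apply mul_ne_zero (RingOfIntegers.coe_ne_zero_iff.mpr hz0) hx0
    rw [← hwK]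
    exact RingOfIntegers.coe_eq_zero_iff.mpr h0
  have hwp : TotPos (w : K) := by
    rw [hwK]; exact hzp.mul hxp
  have hwm : w - 1 ∈ 𝔣 := by
    have h1 : (z : K) * (x - 1) ∈ (𝔟.1 : FractionalIdeal (𝓞 K)⁰ K) *
        ((𝔣 : FractionalIdeal (𝓞 K)⁰ K) * ((𝔟.1 : FractionalIdeal (𝓞 K)⁰ K))⁻¹) :=
      mul_mem_mul (mem_coeIdeal_of_mem (P := K) (𝓞 K)⁰ hz𝔟) hxm
    rw [show ((𝔟.1 : FractionalIdeal (𝓞 K)⁰ K) *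
      ((𝔣 : FractionalIdeal (𝓞 K)⁰ K) * ((𝔟.1 : FractionalIdeal (𝓞 K)⁰ K))⁻¹)) =
      (𝔣 : FractionalIdeal (𝓞 K)⁰ K) by field_simp <;> ring] at h1
    have h2 : ((z : K) - 1) ∈ (𝔣 : FractionalIdeal (𝓞 K)⁰ K) := coe_sub_one_mem hz𝔣
    have h3 : ((w - 1 : 𝓞 K) : K) = (z : K) * (x - 1) + ((z : K) - 1) := by
      rw [RingOfIntegers.coe_eq_algebraMap, _root_.map_sub, _root_.map_one,
        ← RingOfIntegers.coe_eq_algebraMap, hwK]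
      ring
    apply mem_of_coe_mem
    rw [h3]
    exact fmem_add h1 h2
  have hws : spanSingleton (𝓞 K)⁰ (w : K) =
      ((Ideal.span {z} : Ideal (𝓞 K)) : FractionalIdeal (𝓞 K)⁰ K) *
        (𝔞.1 : FractionalIdeal (𝓞 K)⁰ K) * ((𝔟.1 : FractionalIdeal (𝓞 K)⁰ K))⁻¹ := by
    rw [hwK, ← spanSingleton_mul_spanSingleton, hxs, coeIdeal_span_singleton]
    ring
  set 𝔠 : Ideal (𝓞 K) := Ideal.span {z} * 𝔞.1 with h𝔠def
  have h𝔠0 : 𝔠 ≠ 0 :=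
    mul_ne_zero (fun h0 => hz0 (Ideal.span_singleton_eq_bot.mp h0)) 𝔞.2.1
  have h𝔠co : IsCoprime 𝔠 𝔣 :=
    (isCoprime_span_of_sub_one_mem hz𝔣).mul_left 𝔞.2.2
  have hc' : (𝔠 : FractionalIdeal (𝓞 K)⁰ K) =
      ((Ideal.span {z} : Ideal (𝓞 K)) : FractionalIdeal (𝓞 K)⁰ K) *
        (𝔞.1 : FractionalIdeal (𝓞 K)⁰ K) := coeIdeal_mul _ _
  have claim1 : RayRel 𝔣 ⟨𝔠, h𝔠0, h𝔠co⟩ 𝔞 := by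
    refine ⟨(z : K), RingOfIntegers.coe_ne_zero_iff.mpr hz0, hzp, coe_sub_one_mem hz𝔣, ?_⟩
    rw [hc', coeIdeal_span_singleton]
    field_simp
  have claim2 : RayRel 𝔣 ⟨𝔠, h𝔠0, h𝔠co⟩ 𝔟 := by
    refine ⟨(w : K), RingOfIntegers.coe_ne_zero_iff.mpr hw0, hwp, coe_sub_one_mem hwm, ?_⟩
    rw [hc', hws]
  exact (Quot.sound claim1).symm.trans (Quot.sound claim2)

lemma DRrel'_equivalence (𝔣 : Ideal (𝓞 K)) : Equivalence (DRrel' (K := K) 𝔣) :=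
  ⟨fun a => DRrel.refl' 𝔣 a.2,
   fun {a b} h => DRrel.symm' 𝔣 a.2 b.2 h,
   fun {a b c} h1 h2 => DRrel.trans' 𝔣 b.2 h1 h2⟩

end Aux4
theorem DR_units (K : Type*) [Field K] [NumberField K]
    (𝔣 : Ideal (NumberField.RingOfIntegers K)) (h𝔣 : 𝔣 ≠ 0) :
    (∀ 𝔞 : Ideal (NumberField.RingOfIntegers K), 𝔞 ≠ 0 →
      ((∃ 𝔟 : Ideal (NumberField.RingOfIntegers K), 𝔟 ≠ 0 ∧ DRrel 𝔣 (𝔞 * 𝔟) 1) ↔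
        ∃ 𝔞' : Ideal (NumberField.RingOfIntegers K), 𝔞' ≠ 0 ∧ IsCoprime 𝔞' 𝔣 ∧
          DRrel 𝔣 𝔞 𝔞')) ∧
    ∃ e : Quot (RayRel (K := K) 𝔣) ≃ {c : Quot (DRrel' (K := K) 𝔣) // IsInvClass 𝔣 c},
      ∀ 𝔞 : {I : Ideal (NumberField.RingOfIntegers K) // I ≠ 0 ∧ IsCoprime I 𝔣},
        (e (Quot.mk (RayRel 𝔣) 𝔞)).1 = Quot.mk (DRrel' 𝔣) ⟨𝔞.1, 𝔞.2.1⟩ := by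
  constructor
  · intro 𝔞 h𝔞
    constructor
    · rintro ⟨𝔟, h𝔟, hrel⟩
      exact ⟨𝔞, h𝔞, coprime_of_DRrel_one 𝔣 𝔞 𝔟 hrel, DRrel.refl' 𝔣 h𝔞⟩
    · rintro ⟨𝔞', h𝔞', hco, hrel⟩
      obtain ⟨𝔟, h𝔟, hinv⟩ := exists_DRrel_inv 𝔣 𝔞' h𝔣 h𝔞' hco
      exact ⟨𝔟, h𝔟, DRrel.trans' 𝔣 (mul_ne_zero h𝔞' h𝔟)
        (DRrel.mul_right' 𝔣 𝔟 h𝔞' h𝔟 hrel) hinv⟩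
  · classical
    let g : {I : Ideal (𝓞 K) // I ≠ 0 ∧ IsCoprime I 𝔣} →
        {c : Quot (DRrel' (K := K) 𝔣) // IsInvClass 𝔣 c} := fun 𝔞 =>
      ⟨Quot.mk _ ⟨𝔞.1, 𝔞.2.1⟩, by
        obtain ⟨𝔟, h𝔟, h⟩ := exists_DRrel_inv 𝔣 𝔞.1 h𝔣 𝔞.2.1 𝔞.2.2
        exact ⟨⟨𝔞.1, 𝔞.2.1⟩, ⟨𝔟, h𝔟⟩, rfl, h⟩⟩
    have hg : ∀ a b, RayRel 𝔣 a b → g a = g b := by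
      rintro a b ⟨x, hx0, hxp, hxm, hxs⟩
      refine Subtype.ext (Quot.sound ?_)
      refine ⟨x, hx0, hxp, ?_, hxs⟩
      have hb' : (b.1 : FractionalIdeal (𝓞 K)⁰ K) ≠ 0 := coeIdeal_ne_zero.mpr b.2.1
      have hone : (1 : K) ∈ ((b.1 : FractionalIdeal (𝓞 K)⁰ K))⁻¹ := by
        rw [mem_inv_iff hb']
        intro y hy
        rw [one_mul]
        exact coeIdeal_le_one hy
      have h1 := mul_mem_mul hxm hone
      rwa [mul_one] at h1
    have hbij : Function.Bijective (Quot.lift g hg) := by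
      constructor
      · intro a b h
        induction a using Quot.ind with | _ a => ?_
        induction b using Quot.ind with | _ b => ?_
        have h2 : Quot.mk (DRrel' (K := K) 𝔣) ⟨a.1, a.2.1⟩ =
            Quot.mk (DRrel' (K := K) 𝔣) ⟨b.1, b.2.1⟩ := congrArg Subtype.val h
        have h3 : DRrel' (K := K) 𝔣 ⟨a.1, a.2.1⟩ ⟨b.1, b.2.1⟩ :=
          ((DRrel'_equivalence 𝔣).eqvGen_iff).mp (Quot.eqvGen_exact h2)
        exact rayQuot_eq_of_DRrel 𝔣 h𝔣 a b h3
      · rintro ⟨c, hc⟩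
        obtain ⟨𝔞, 𝔟, rfl, hrel⟩ := hc
        have hco : IsCoprime 𝔞.1 𝔣 := coprime_of_DRrel_one 𝔣 𝔞.1 𝔟.1 hrel
        exact ⟨Quot.mk _ ⟨𝔞.1, 𝔞.2, hco⟩, Subtype.ext rfl⟩
    refine ⟨Equiv.ofBijective _ hbij, fun 𝔞 => ?_⟩
    rw [Equiv.ofBijective_apply]
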